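/- arXiv:2604.00060 — 4 statements merged into one kernel-verified Lean document; each statement's English description precedes it below -/
import Mathlib

section
/- Let X⋆ ∈ ℝ^{n1×n2} have rank r with compact SVD X⋆ = V⋆Σ⋆W⋆ᵀ and let X_t ∈ ℝ^{n1×n2} have rank r with compact SVD X_t = V_tΣ_tW_tᵀ. Assume max{‖V_{⋆,⊥}ᵀV_t‖, ‖W_{⋆,⊥}ᵀW_t‖} ≤ 1/√2. Then: (a) ‖V_{⋆,⊥}ᵀ X_t W_{⋆,⊥}‖ ≤ 2‖V_{⋆,⊥}ᵀV_t‖·‖V⋆ᵀ(X_t − X⋆)W_{⋆,⊥}‖; (b) ‖V_{⋆,⊥}ᵀ X_t W_{⋆,⊥}‖ ≤ 2‖W_{⋆,⊥}ᵀW_t‖·‖V_{⋆,⊥}ᵀ(X_t − X⋆)W⋆‖; and (c) ‖X_t − X⋆‖ ≤ (1 + ‖W_{⋆,⊥}ᵀW_t‖)·‖(X_t − X⋆)W⋆‖ + (1 + ‖V_{⋆,⊥}ᵀV_t‖)·‖V⋆ᵀ(X_t − X⋆)‖. -/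
open Matrix MeasureTheory ProbabilityTheory
open scoped BigOperators

noncomputable section

/-- Frobenius inner product `⟨A, B⟩ = trace (Aᵀ * B)`. -/
def frobInner {n1 n2 : ℕ} (A B : Matrix (Fin n1) (Fin n2) ℝ) : ℝ :=
  Matrix.trace (Aᵀ * B)

/-- Frobenius norm of a matrix. -/
def frobNorm {n1 n2 : ℕ} (A : Matrix (Fin n1) (Fin n2) ℝ) : ℝ :=
  Real.sqrt (∑ i, ∑ j, A i j ^ 2)

/-- Spectral (ℓ²-operator) norm of a matrix. -/
def specNorm {n1 n2 : ℕ} (A : Matrix (Fin n1) (Fin n2) ℝ) : ℝ :=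
  ‖LinearMap.toContinuousLinearMap (Matrix.toEuclideanLin A)‖

/-- Euclidean norm of a vector in ℝ^m. -/
def vecNorm {m : ℕ} (v : Fin m → ℝ) : ℝ :=
  Real.sqrt (∑ i, v i ^ 2)

/-- Smallest nonzero singular value of a matrix: the singular values of `X` are the
square roots of the eigenvalues of `Xᴴ * X`. -/
def sigmaMin {n1 n2 : ℕ} (X : Matrix (Fin n1) (Fin n2) ℝ) : ℝ :=
  sInf {s : ℝ | 0 < s ∧ ∃ i : Fin n2,
    s ^ 2 = (Matrix.isHermitian_conjTranspose_mul_self X).eigenvalues i}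

/-- The measurement operator `𝒜(X) i = (1/√m) ⟨A i, X⟩`. -/
def measOp {n1 n2 m : ℕ} (A : Fin m → Matrix (Fin n1) (Fin n2) ℝ)
    (X : Matrix (Fin n1) (Fin n2) ℝ) : Fin m → ℝ :=
  fun i => (Real.sqrt m)⁻¹ * frobInner (A i) X

/-- The adjoint `𝒜*(u) = (1/√m) ∑ i, u i • A i`. -/
def measAdj {n1 n2 m : ℕ} (A : Fin m → Matrix (Fin n1) (Fin n2) ℝ)
    (u : Fin m → ℝ) : Matrix (Fin n1) (Fin n2) ℝ :=
  (Real.sqrt m)⁻¹ • ∑ i, u i • A i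

/-- The composite operator `𝒜*𝒜`. -/
def opAA {n1 n2 m : ℕ} (A : Fin m → Matrix (Fin n1) (Fin n2) ℝ)
    (X : Matrix (Fin n1) (Fin n2) ℝ) : Matrix (Fin n1) (Fin n2) ℝ :=
  measAdj A (measOp A X)

/-- Rank-`k` restricted isometry property with constant `δ`. -/
def HasRIP {n1 n2 m : ℕ} (A : Fin m → Matrix (Fin n1) (Fin n2) ℝ) (k : ℕ) (δ : ℝ) : Prop :=
  ∀ Z : Matrix (Fin n1) (Fin n2) ℝ, Z.rank ≤ k →
    (1 - δ) * frobNorm Z ^ 2 ≤ vecNorm (measOp A Z) ^ 2 ∧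
      vecNorm (measOp A Z) ^ 2 ≤ (1 + δ) * frobNorm Z ^ 2

/-- Compact SVD: `X = V * S * Wᵀ`, `V, W` with orthonormal columns, `S` diagonal with
positive diagonal entries. -/
def IsCompactSVD {n1 n2 r : ℕ} (X : Matrix (Fin n1) (Fin n2) ℝ)
    (V : Matrix (Fin n1) (Fin r) ℝ) (S : Matrix (Fin r) (Fin r) ℝ)
    (W : Matrix (Fin n2) (Fin r) ℝ) : Prop :=
  X = V * S * Wᵀ ∧ Vᵀ * V = 1 ∧ Wᵀ * W = 1 ∧
    (∀ i j, i ≠ j → S i j = 0) ∧ (∀ i, 0 < S i i)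

/-- `Vp` is a matrix whose columns form an orthonormal basis of the orthogonal
complement of the column space of `V` (which has orthonormal columns). -/
def IsOrthComplement {n r : ℕ} (V : Matrix (Fin n) (Fin r) ℝ)
    (Vp : Matrix (Fin n) (Fin (n - r)) ℝ) : Prop :=
  Vpᵀ * Vp = 1 ∧ Vᵀ * Vp = 0

end

section Aux

lemma vecNorm_eq {n : ℕ} (v : Fin n → ℝ) :
    vecNorm v = ‖(WithLp.equiv 2 (Fin n → ℝ)).symm v‖ := by
  rw [EuclideanSpace.norm_eq, vecNorm]
  congr 1
  refine Finset.sum_congr rfl fun i _ => ?_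
  rw [WithLp.equiv_symm_apply, WithLp.ofLp_toLp, Real.norm_eq_abs, sq_abs]

lemma vecNorm_nonneg {n : ℕ} (v : Fin n → ℝ) : 0 ≤ vecNorm v := Real.sqrt_nonneg _

lemma specNorm_nonneg {m n : ℕ} (A : Matrix (Fin m) (Fin n) ℝ) : 0 ≤ specNorm A :=
  norm_nonneg _

lemma mulVec_vecNorm_le {m n : ℕ} (A : Matrix (Fin m) (Fin n) ℝ) (v : Fin n → ℝ) :
    vecNorm (A *ᵥ v) ≤ specNorm A * vecNorm v := by
  rw [vecNorm_eq, vecNorm_eq]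
  have h := (LinearMap.toContinuousLinearMap (Matrix.toEuclideanLin A)).le_opNorm
    ((WithLp.equiv 2 (Fin n → ℝ)).symm v)
  rw [LinearMap.coe_toContinuousLinearMap'] at h
  rwa [Matrix.toEuclideanLin_apply, WithLp.equiv_symm_apply, WithLp.ofLp_toLp] at h

lemma specNorm_le_bound {m n : ℕ} (A : Matrix (Fin m) (Fin n) ℝ) {c : ℝ} (hc : 0 ≤ c)
    (h : ∀ v : Fin n → ℝ, vecNorm (A *ᵥ v) ≤ c * vecNorm v) : specNorm A ≤ c := by
  refine ContinuousLinearMap.opNorm_le_bound _ hc fun x => ?_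
  have h2 := h ((WithLp.equiv 2 (Fin n → ℝ)) x)
  rw [vecNorm_eq, vecNorm_eq, Equiv.symm_apply_apply] at h2
  rw [LinearMap.coe_toContinuousLinearMap', Matrix.toEuclideanLin_apply]
  exact h2

lemma vecNorm_sq {n : ℕ} (v : Fin n → ℝ) : vecNorm v ^ 2 = v ⬝ᵥ v := by
  rw [vecNorm, Real.sq_sqrt (by positivity)]
  simp [dotProduct, sq]

lemma dot_self_tmul {n r : ℕ} (V : Matrix (Fin n) (Fin r) ℝ) (w : Fin n → ℝ) :
    (Vᵀ *ᵥ w) ⬝ᵥ (Vᵀ *ᵥ w) = w ⬝ᵥ ((V * Vᵀ) *ᵥ w) := by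
  rw [← Matrix.mulVec_mulVec, Matrix.dotProduct_mulVec, ← Matrix.mulVec_transpose, Matrix.transpose_transpose, dotProduct_comm]

lemma pyth {n r : ℕ} {V : Matrix (Fin n) (Fin r) ℝ} {Vp : Matrix (Fin n) (Fin (n - r)) ℝ}
    (hcomp : V * Vᵀ + Vp * Vpᵀ = 1) (w : Fin n → ℝ) :
    vecNorm (Vᵀ *ᵥ w) ^ 2 + vecNorm (Vpᵀ *ᵥ w) ^ 2 = vecNorm w ^ 2 := by
  rw [vecNorm_sq, vecNorm_sq, vecNorm_sq, dot_self_tmul, dot_self_tmul,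
    ← dotProduct_add, ← Matrix.add_mulVec, hcomp, Matrix.one_mulVec]

lemma isometry_mulVec {n r : ℕ} {V : Matrix (Fin n) (Fin r) ℝ} (hV : Vᵀ * V = 1)
    (z : Fin r → ℝ) : vecNorm (V *ᵥ z) = vecNorm z := by
  have h : (V *ᵥ z) ⬝ᵥ (V *ᵥ z) = z ⬝ᵥ z := by
    have := dot_self_tmul Vᵀ z
    rw [Matrix.transpose_transpose] at this
    rw [this, hV, Matrix.one_mulVec]
  rw [vecNorm, vecNorm]
  congr 1
  have h1 := vecNorm_sq (V *ᵥ z); have h2 := vecNorm_sq z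
  simp only [vecNorm] at h1 h2
  rw [Real.sq_sqrt (by positivity)] at h1 h2
  rw [h1, h2, h]

lemma dot_le_vecNorm {n : ℕ} (v w : Fin n → ℝ) : v ⬝ᵥ w ≤ vecNorm v * vecNorm w := by
  have h := Finset.sum_mul_sq_le_sq_mul_sq Finset.univ v w
  have h2 : (v ⬝ᵥ w) ^ 2 ≤ (vecNorm v * vecNorm w) ^ 2 := by
    rw [mul_pow, vecNorm_sq, vecNorm_sq]
    simpa [dotProduct, sq, mul_comm, Finset.mul_sum] using h
  have h3 : 0 ≤ vecNorm v * vecNorm w := mul_nonneg (vecNorm_nonneg v) (vecNorm_nonneg w)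
  nlinarith [sq_nonneg (v ⬝ᵥ w - vecNorm v * vecNorm w)]

lemma specNorm_transpose_le {m n : ℕ} (A : Matrix (Fin m) (Fin n) ℝ) :
    specNorm Aᵀ ≤ specNorm A := by
  refine specNorm_le_bound _ (specNorm_nonneg A) fun v => ?_
  set t := vecNorm (Aᵀ *ᵥ v) with ht
  have h1 : t ^ 2 = v ⬝ᵥ (A *ᵥ (Aᵀ *ᵥ v)) := by
    rw [ht, vecNorm_sq, dot_self_tmul, Matrix.mulVec_mulVec]
  have h2 : v ⬝ᵥ (A *ᵥ (Aᵀ *ᵥ v)) ≤ vecNorm v * (specNorm A * t) := by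
    calc v ⬝ᵥ (A *ᵥ (Aᵀ *ᵥ v)) ≤ vecNorm v * vecNorm (A *ᵥ (Aᵀ *ᵥ v)) :=
          dot_le_vecNorm _ _
      _ ≤ vecNorm v * (specNorm A * t) := by
          exact mul_le_mul_of_nonneg_left (mulVec_vecNorm_le A _) (vecNorm_nonneg v)
  have ht0 : 0 ≤ t := vecNorm_nonneg _
  rcases eq_or_lt_of_le ht0 with h | h
  · rw [← h]; exact mul_nonneg (specNorm_nonneg _) (vecNorm_nonneg _)
  · have : t * t ≤ (specNorm A * vecNorm v) * t := by nlinarith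
    have := le_of_mul_le_mul_right this h
    linarith

lemma specNorm_transpose {m n : ℕ} (A : Matrix (Fin m) (Fin n) ℝ) :
    specNorm Aᵀ = specNorm A := by
  refine le_antisymm (specNorm_transpose_le A) ?_
  have := specNorm_transpose_le Aᵀ
  rwa [Matrix.transpose_transpose] at this

lemma rank_le_of_orth {n r : ℕ} {V : Matrix (Fin n) (Fin r) ℝ} (hV : Vᵀ * V = 1) :
    r ≤ n := by
  have h1 : (Vᵀ * V).rank = r := by rw [hV, Matrix.rank_one, Fintype.card_fin]
  have h2 : (Vᵀ * V).rank ≤ V.rank := Matrix.rank_mul_le_right _ _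
  have h3 : V.rank ≤ n := (Matrix.rank_le_card_height V).trans (Fintype.card_fin n).le
  omega

lemma complement_complete {n r : ℕ} {V : Matrix (Fin n) (Fin r) ℝ}
    {Vp : Matrix (Fin n) (Fin (n - r)) ℝ} (hV : Vᵀ * V = 1) (h1 : Vpᵀ * Vp = 1)
    (h2 : Vᵀ * Vp = 0) : V * Vᵀ + Vp * Vpᵀ = 1 := by
  have hr : r ≤ n := rank_le_of_orth hV
  have e : Fin n ≃ Fin r ⊕ Fin (n - r) :=
    (finCongr (Nat.add_sub_cancel' hr)).symm.trans finSumFinEquiv.symm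
  have h2' : Vpᵀ * V = 0 := by
    have := congrArg Matrix.transpose h2
    simpa using this
  have key : Matrix.fromRows Vᵀ Vpᵀ * Matrix.fromCols V Vp = 1 := by
    rw [Matrix.fromRows_mul_fromCols, hV, h1, h2, h2', Matrix.fromBlocks_one]
  have := (Matrix.fromCols_mul_fromRows_eq_one_comm e V Vp Vᵀ Vpᵀ).mpr key
  rwa [Matrix.fromCols_mul_fromRows] at this

lemma sq_le_half {a : ℝ} (ha0 : 0 ≤ a) (ha : a ≤ 1 / Real.sqrt 2) : a ^ 2 ≤ 1 / 2 := by
  have h2 : Real.sqrt 2 ^ 2 = 2 := Real.sq_sqrt (by norm_num)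
  have hpos : 0 < Real.sqrt 2 := Real.sqrt_pos.mpr (by norm_num)
  have : a ^ 2 ≤ (1 / Real.sqrt 2) ^ 2 := pow_le_pow_left₀ ha0 ha 2
  rw [div_pow, h2] at this
  simpa using this

lemma poly_fact {a : ℝ} (ha0 : 0 ≤ a) (ha : a ^ 2 ≤ 1 / 2) :
    1 ≤ (1 + a) ^ 2 * (1 - a ^ 2) := by
  have ha1 : a ≤ 1 := by nlinarith
  nlinarith [mul_nonneg ha0 ha0, mul_nonneg (mul_nonneg ha0 ha0) ha0, sq_nonneg (1 - a)]

/-- Core estimate: with orthonormal `P, Pp` complementary and `Q` orthonormal,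
`‖Ppᵀ Q M‖ ≤ 2 ‖Ppᵀ Q‖ ‖Pᵀ Q M‖` provided `‖Ppᵀ Q‖ ≤ 1/√2`. -/
lemma core_bound {n r k : ℕ} (P : Matrix (Fin n) (Fin r) ℝ)
    (Pp : Matrix (Fin n) (Fin (n - r)) ℝ) (Q : Matrix (Fin n) (Fin r) ℝ)
    (M : Matrix (Fin r) (Fin k) ℝ)
    (hP : Pᵀ * P = 1) (hPp : Ppᵀ * Pp = 1) (hO : Pᵀ * Pp = 0) (hQ : Qᵀ * Q = 1)
    (ha : specNorm (Ppᵀ * Q) ≤ 1 / Real.sqrt 2) :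
    specNorm (Ppᵀ * Q * M) ≤ 2 * specNorm (Ppᵀ * Q) * specNorm (Pᵀ * Q * M) := by
  set a := specNorm (Ppᵀ * Q) with haa
  have ha0 : 0 ≤ a := specNorm_nonneg _
  have ha2 : a ^ 2 ≤ 1 / 2 := sq_le_half ha0 ha
  have hcomp := complement_complete hP hPp hO
  refine specNorm_le_bound _
    (mul_nonneg (mul_nonneg (by norm_num) ha0) (specNorm_nonneg _)) fun v => ?_
  obtain ⟨z, hz⟩ : ∃ z, z = M *ᵥ v := ⟨_, rfl⟩
  set u := vecNorm ((Pᵀ * Q * M) *ᵥ v) with hu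
  have hu0 : 0 ≤ u := vecNorm_nonneg _
  have hpyth : vecNorm ((Pᵀ * Q) *ᵥ z) ^ 2 + vecNorm ((Ppᵀ * Q) *ᵥ z) ^ 2
      = vecNorm z ^ 2 := by
    have h := pyth hcomp (Q *ᵥ z)
    rw [Matrix.mulVec_mulVec, Matrix.mulVec_mulVec, isometry_mulVec hQ] at h
    exact h
  have heq1 : (Pᵀ * Q * M) *ᵥ v = (Pᵀ * Q) *ᵥ z := by rw [hz, Matrix.mulVec_mulVec]
  have heq2 : (Ppᵀ * Q * M) *ᵥ v = (Ppᵀ * Q) *ᵥ z := by rw [hz, Matrix.mulVec_mulVec]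
  have hb : vecNorm ((Ppᵀ * Q) *ᵥ z) ≤ a * vecNorm z := mulVec_vecNorm_le _ _
  have hz0 : 0 ≤ vecNorm z := vecNorm_nonneg _
  have hbig : vecNorm z ^ 2 ≤ 2 * u ^ 2 := by
    have h1 : vecNorm ((Ppᵀ * Q) *ᵥ z) ^ 2 ≤ a ^ 2 * vecNorm z ^ 2 := by
      nlinarith [vecNorm_nonneg ((Ppᵀ * Q) *ᵥ z)]
    rw [hu, heq1]
    nlinarith
  have hs2 : vecNorm z ≤ Real.sqrt 2 * u := by
    have h2 : (Real.sqrt 2 * u) ^ 2 = 2 * u ^ 2 := by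
      rw [mul_pow, Real.sq_sqrt (by norm_num : (0:ℝ) ≤ 2)]
    nlinarith [Real.sqrt_nonneg 2, mul_nonneg (Real.sqrt_nonneg 2) hu0]
  have hsqrt2 : Real.sqrt 2 ≤ 2 := by
    nlinarith [Real.sq_sqrt (by norm_num : (0:ℝ) ≤ 2), Real.sqrt_nonneg 2]
  have hfin : vecNorm ((Ppᵀ * Q * M) *ᵥ v) ≤ 2 * a * u := by
    rw [heq2]
    have hstep := mul_le_mul_of_nonneg_right hsqrt2 (mul_nonneg ha0 hu0)
    calc vecNorm ((Ppᵀ * Q) *ᵥ z) ≤ a * vecNorm z := hb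
      _ ≤ a * (Real.sqrt 2 * u) := mul_le_mul_of_nonneg_left hs2 ha0
      _ ≤ 2 * a * u := by nlinarith
  calc vecNorm ((Ppᵀ * Q * M) *ᵥ v) ≤ 2 * a * u := hfin
    _ ≤ 2 * a * (specNorm (Pᵀ * Q * M) * vecNorm v) :=
        mul_le_mul_of_nonneg_left (by rw [hu]; exact mulVec_vecNorm_le _ _)
          (by nlinarith)
    _ = 2 * a * specNorm (Pᵀ * Q * M) * vecNorm v := by ring

lemma sq_le_imp {x y : ℝ} (hx : 0 ≤ x) (hy : 0 ≤ y) (h : x ^ 2 ≤ y ^ 2) : x ≤ y := by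
  nlinarith [sq_nonneg (x + y), sq_nonneg (x - y)]

lemma vecNorm_add_le {n : ℕ} (x y : Fin n → ℝ) :
    vecNorm (x + y) ≤ vecNorm x + vecNorm y := by
  have hdot := dot_le_vecNorm x y
  have hexp : vecNorm (x + y) ^ 2
      = vecNorm x ^ 2 + 2 * (x ⬝ᵥ y) + vecNorm y ^ 2 := by
    rw [vecNorm_sq, vecNorm_sq, vecNorm_sq, add_dotProduct,
      dotProduct_add, dotProduct_add, dotProduct_comm y x]
    ring
  refine sq_le_imp (vecNorm_nonneg _) (add_nonneg (vecNorm_nonneg x) (vecNorm_nonneg y)) ?_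
  nlinarith [vecNorm_nonneg x, vecNorm_nonneg y]

lemma contraction {n r : ℕ} {V : Matrix (Fin n) (Fin r) ℝ}
    {Vp : Matrix (Fin n) (Fin (n - r)) ℝ} (hcomp : V * Vᵀ + Vp * Vpᵀ = 1)
    (w : Fin n → ℝ) :
    vecNorm (Vᵀ *ᵥ w) ≤ vecNorm w ∧ vecNorm (Vpᵀ *ᵥ w) ≤ vecNorm w := by
  have h := pyth hcomp w
  constructor
  · refine sq_le_imp (vecNorm_nonneg _) (vecNorm_nonneg _) ?_
    nlinarith [vecNorm_nonneg (Vpᵀ *ᵥ w)]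
  · refine sq_le_imp (vecNorm_nonneg _) (vecNorm_nonneg _) ?_
    nlinarith [vecNorm_nonneg (Vᵀ *ᵥ w)]

lemma specNorm_split {m n r : ℕ} (Δ : Matrix (Fin m) (Fin n) ℝ)
    {Ws : Matrix (Fin n) (Fin r) ℝ} {Wsp : Matrix (Fin n) (Fin (n - r)) ℝ}
    (hcomp : Ws * Wsᵀ + Wsp * Wspᵀ = 1) :
    specNorm Δ ≤ specNorm (Δ * Ws) + specNorm (Δ * Wsp) := by
  refine specNorm_le_bound _ (add_nonneg (specNorm_nonneg _) (specNorm_nonneg _)) fun v => ?_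
  have hid : Δ * Ws * Wsᵀ + Δ * Wsp * Wspᵀ = Δ := by
    rw [Matrix.mul_assoc, Matrix.mul_assoc, ← Matrix.mul_add, hcomp, Matrix.mul_one]
  have hΔ : Δ *ᵥ v = (Δ * Ws) *ᵥ (Wsᵀ *ᵥ v) + (Δ * Wsp) *ᵥ (Wspᵀ *ᵥ v) := by
    rw [Matrix.mulVec_mulVec, Matrix.mulVec_mulVec, ← Matrix.add_mulVec, hid]
  rw [hΔ]
  have hc := contraction hcomp v
  calc vecNorm ((Δ * Ws) *ᵥ (Wsᵀ *ᵥ v) + (Δ * Wsp) *ᵥ (Wspᵀ *ᵥ v))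
      ≤ vecNorm ((Δ * Ws) *ᵥ (Wsᵀ *ᵥ v)) + vecNorm ((Δ * Wsp) *ᵥ (Wspᵀ *ᵥ v)) :=
        vecNorm_add_le _ _
    _ ≤ specNorm (Δ * Ws) * vecNorm (Wsᵀ *ᵥ v)
        + specNorm (Δ * Wsp) * vecNorm (Wspᵀ *ᵥ v) :=
        add_le_add (mulVec_vecNorm_le _ _) (mulVec_vecNorm_le _ _)
    _ ≤ specNorm (Δ * Ws) * vecNorm v + specNorm (Δ * Wsp) * vecNorm v :=
        add_le_add (mul_le_mul_of_nonneg_left hc.1 (specNorm_nonneg _))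
          (mul_le_mul_of_nonneg_left hc.2 (specNorm_nonneg _))
    _ = (specNorm (Δ * Ws) + specNorm (Δ * Wsp)) * vecNorm v := by ring

lemma wsp_bound {n1 n2 r : ℕ}
    (Δ Xt : Matrix (Fin n1) (Fin n2) ℝ)
    (Vs : Matrix (Fin n1) (Fin r) ℝ) (Vsp : Matrix (Fin n1) (Fin (n1 - r)) ℝ)
    (Vt : Matrix (Fin n1) (Fin r) ℝ) (St : Matrix (Fin r) (Fin r) ℝ)
    (Wt : Matrix (Fin n2) (Fin r) ℝ) (Wsp : Matrix (Fin n2) (Fin (n2 - r)) ℝ)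
    (hVs : Vsᵀ * Vs = 1) (hVsp : Vspᵀ * Vsp = 1) (hVO : Vsᵀ * Vsp = 0)
    (hVt : Vtᵀ * Vt = 1) (hWsp1 : Wspᵀ * Wsp = 1)
    (hXt : Xt = Vt * St * Wtᵀ) (hΔW : Δ * Wsp = Xt * Wsp)
    (ha : specNorm (Vspᵀ * Vt) ≤ 1 / Real.sqrt 2) :
    specNorm (Δ * Wsp) ≤ (1 + specNorm (Vspᵀ * Vt)) * specNorm (Vsᵀ * Δ) := by
  set a := specNorm (Vspᵀ * Vt) with haa
  have ha0 : 0 ≤ a := specNorm_nonneg _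
  have ha2 : a ^ 2 ≤ 1 / 2 := sq_le_half ha0 ha
  have hcomp := complement_complete hVs hVsp hVO
  have hpoly := poly_fact ha0 ha2
  refine specNorm_le_bound _
    (mul_nonneg (by linarith) (specNorm_nonneg _)) fun y => ?_
  obtain ⟨w, hw⟩ : ∃ w, w = (Δ * Wsp) *ᵥ y := ⟨_, rfl⟩
  set t := vecNorm w with htt
  have ht0 : 0 ≤ t := vecNorm_nonneg _
  set c1 := specNorm (Vsᵀ * Δ) * vecNorm y with hc1
  have hc10 : 0 ≤ c1 := mul_nonneg (specNorm_nonneg _) (vecNorm_nonneg _)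
  -- first block
  have h1 : vecNorm (Vsᵀ *ᵥ w) ≤ c1 := by
    have he : Vsᵀ *ᵥ w = (Vsᵀ * Δ) *ᵥ (Wsp *ᵥ y) := by
      rw [hw, Matrix.mulVec_mulVec, Matrix.mulVec_mulVec, ← Matrix.mul_assoc]
    rw [he, hc1]
    calc vecNorm ((Vsᵀ * Δ) *ᵥ (Wsp *ᵥ y))
        ≤ specNorm (Vsᵀ * Δ) * vecNorm (Wsp *ᵥ y) := mulVec_vecNorm_le _ _
      _ = specNorm (Vsᵀ * Δ) * vecNorm y := by rw [isometry_mulVec hWsp1]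
  -- second block
  have h2 : vecNorm (Vspᵀ *ᵥ w) ≤ a * t := by
    obtain ⟨z2, hz2⟩ : ∃ z2, z2 = (St * (Wtᵀ * Wsp)) *ᵥ y := ⟨_, rfl⟩
    have he2 : Vspᵀ *ᵥ w = (Vspᵀ * Vt) *ᵥ z2 := by
      rw [hw, hz2, Matrix.mulVec_mulVec, Matrix.mulVec_mulVec, hΔW, hXt]
      simp only [Matrix.mul_assoc]
    have hnz2 : vecNorm z2 = t := by
      have : Vt *ᵥ z2 = w := by
        rw [hw, hz2, Matrix.mulVec_mulVec, hΔW, hXt]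
        simp only [Matrix.mul_assoc]
      rw [← isometry_mulVec hVt z2, this]
    calc vecNorm (Vspᵀ *ᵥ w) = vecNorm ((Vspᵀ * Vt) *ᵥ z2) := by rw [he2]
      _ ≤ a * vecNorm z2 := mulVec_vecNorm_le _ _
      _ = a * t := by rw [hnz2]
  have hpyth : vecNorm (Vsᵀ *ᵥ w) ^ 2 + vecNorm (Vspᵀ *ᵥ w) ^ 2 = t ^ 2 := pyth hcomp w
  -- conclude
  have hkey : t ^ 2 ≤ ((1 + a) * c1) ^ 2 := by
    have hq1 : (1 - a ^ 2) * t ^ 2 ≤ c1 ^ 2 := by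
      nlinarith [vecNorm_nonneg (Vsᵀ *ᵥ w), vecNorm_nonneg (Vspᵀ *ᵥ w),
        mul_nonneg ha0 ht0]
    nlinarith [mul_le_mul_of_nonneg_left hq1 (sq_nonneg (1 + a)),
      mul_le_mul_of_nonneg_right hpoly (sq_nonneg t)]
  have := sq_le_imp ht0 (mul_nonneg (by linarith) hc10) hkey
  rw [hw] at htt
  rw [← htt]
  calc t ≤ (1 + a) * c1 := this
    _ = (1 + a) * specNorm (Vsᵀ * Δ) * vecNorm y := by rw [hc1]; ring

end Aux

/-- Operator-norm bounds on the `(⊥,⊥)` block of `X_t` and on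
`X_t − X⋆` via its projections. -/
theorem statement6 {n1 n2 r : ℕ}
    (Xstar Xt : Matrix (Fin n1) (Fin n2) ℝ)
    (Vs : Matrix (Fin n1) (Fin r) ℝ) (Ss : Matrix (Fin r) (Fin r) ℝ)
    (Ws : Matrix (Fin n2) (Fin r) ℝ) (hXstar : IsCompactSVD Xstar Vs Ss Ws)
    (Vsp : Matrix (Fin n1) (Fin (n1 - r)) ℝ) (hVsp : IsOrthComplement Vs Vsp)
    (Wsp : Matrix (Fin n2) (Fin (n2 - r)) ℝ) (hWsp : IsOrthComplement Ws Wsp)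
    (Vt : Matrix (Fin n1) (Fin r) ℝ) (St : Matrix (Fin r) (Fin r) ℝ)
    (Wt : Matrix (Fin n2) (Fin r) ℝ) (hXt : IsCompactSVD Xt Vt St Wt)
    (hproj : max (specNorm (Vspᵀ * Vt)) (specNorm (Wspᵀ * Wt)) ≤ 1 / Real.sqrt 2) :
    specNorm (Vspᵀ * Xt * Wsp) ≤
      2 * specNorm (Vspᵀ * Vt) * specNorm (Vsᵀ * (Xt - Xstar) * Wsp) ∧
    specNorm (Vspᵀ * Xt * Wsp) ≤
      2 * specNorm (Wspᵀ * Wt) * specNorm (Vspᵀ * (Xt - Xstar) * Ws) ∧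
    specNorm (Xt - Xstar) ≤
      (1 + specNorm (Wspᵀ * Wt)) * specNorm ((Xt - Xstar) * Ws)
        + (1 + specNorm (Vspᵀ * Vt)) * specNorm (Vsᵀ * (Xt - Xstar)) := by
  obtain ⟨hXs, hVs, hWs, -, -⟩ := hXstar
  obtain ⟨hXteq, hVt, hWt, -, -⟩ := hXt
  obtain ⟨hVsp1, hVsp2⟩ := hVsp
  obtain ⟨hWsp1, hWsp2⟩ := hWsp
  have ha : specNorm (Vspᵀ * Vt) ≤ 1 / Real.sqrt 2 :=
    le_trans (le_max_left _ _) hproj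
  have hb : specNorm (Wspᵀ * Wt) ≤ 1 / Real.sqrt 2 :=
    le_trans (le_max_right _ _) hproj
  have hXsW : Xstar * Wsp = 0 := by
    rw [hXs]; simp only [Matrix.mul_assoc]; rw [hWsp2]
    simp [Matrix.mul_zero]
  have hXsTV : Xstarᵀ * Vsp = 0 := by
    rw [hXs]
    simp only [Matrix.transpose_mul, Matrix.transpose_transpose, Matrix.mul_assoc]
    rw [hVsp2]
    simp [Matrix.mul_zero]
  refine ⟨?_, ?_, ?_⟩
  · -- part (a)
    have e1 : Vspᵀ * Xt * Wsp = Vspᵀ * Vt * (St * (Wtᵀ * Wsp)) := by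
      rw [hXteq]; simp only [Matrix.mul_assoc]
    have e2 : Vsᵀ * (Xt - Xstar) * Wsp = Vsᵀ * Vt * (St * (Wtᵀ * Wsp)) := by
      rw [Matrix.mul_sub, Matrix.sub_mul]
      have : Vsᵀ * Xstar * Wsp = 0 := by
        rw [Matrix.mul_assoc, hXsW, Matrix.mul_zero]
      rw [this, sub_zero, hXteq]; simp only [Matrix.mul_assoc]
    rw [e1, e2]
    exact core_bound Vs Vsp Vt (St * (Wtᵀ * Wsp)) hVs hVsp1 hVsp2 hVt ha
  · -- part (b)
    rw [← specNorm_transpose (Vspᵀ * Xt * Wsp),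
      ← specNorm_transpose (Vspᵀ * (Xt - Xstar) * Ws)]
    have f1 : (Vspᵀ * Xt * Wsp)ᵀ = Wspᵀ * Wt * (Stᵀ * (Vtᵀ * Vsp)) := by
      rw [hXteq]
      simp only [Matrix.transpose_mul, Matrix.transpose_transpose, Matrix.mul_assoc]
    have f2 : (Vspᵀ * (Xt - Xstar) * Ws)ᵀ = Wsᵀ * Wt * (Stᵀ * (Vtᵀ * Vsp)) := by
      simp only [Matrix.transpose_mul, Matrix.transpose_transpose, Matrix.transpose_sub,
        Matrix.sub_mul, Matrix.mul_sub]
      have : Wsᵀ * (Xstarᵀ * Vsp) = 0 := by rw [hXsTV, Matrix.mul_zero]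
      rw [this, sub_zero, hXteq]
      simp only [Matrix.transpose_mul, Matrix.transpose_transpose, Matrix.mul_assoc]
    rw [f1, f2]
    exact core_bound Ws Wsp Wt (Stᵀ * (Vtᵀ * Vsp)) hWs hWsp1 hWsp2 hWt hb
  · -- part (c)
    have hWcomp := complement_complete hWs hWsp1 hWsp2
    have step1 := specNorm_split (Xt - Xstar) hWcomp
    have hΔW : (Xt - Xstar) * Wsp = Xt * Wsp := by
      rw [Matrix.sub_mul, hXsW, sub_zero]
    have step2 := wsp_bound (Xt - Xstar) Xt Vs Vsp Vt St Wt Wsp hVs hVsp1 hVsp2 hVt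
      hWsp1 hXteq hΔW ha
    have hb0 : 0 ≤ specNorm (Wspᵀ * Wt) := specNorm_nonneg _
    have h0 : 0 ≤ specNorm ((Xt - Xstar) * Ws) := specNorm_nonneg _
    nlinarith [mul_nonneg hb0 h0]
end

section
/- Let A, B ∈ ℝ^{m×n} satisfy rank(A) = rank(B). Then ‖B⁺ − A⁺‖_F ≤ 3·‖B⁺‖·‖A⁺‖·‖B − A‖_F, where B⁺ and A⁺ denote Moore–Penrose pseudoinverses. In particular, if A = UΣWᵀ is a compact SVD of A, then A⁺ = WΣ^{−1}Uᵀ. -/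
open Matrix MeasureTheory ProbabilityTheory
open scoped BigOperators

noncomputable section

/-- `B` is the Moore–Penrose pseudoinverse of `A`. -/
def IsMoorePenrose {p q : ℕ} (A : Matrix (Fin p) (Fin q) ℝ)
    (B : Matrix (Fin q) (Fin p) ℝ) : Prop :=
  A * B * A = A ∧ B * A * B = B ∧ (A * B)ᵀ = A * B ∧ (B * A)ᵀ = B * A

end

noncomputable section WedinAux

open Matrix

namespace WedinAux

lemma frobNorm_nonneg {n1 n2 : ℕ} (A : Matrix (Fin n1) (Fin n2) ℝ) : 0 ≤ frobNorm A :=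
  Real.sqrt_nonneg _

lemma specNorm_nonneg {n1 n2 : ℕ} (A : Matrix (Fin n1) (Fin n2) ℝ) : 0 ≤ specNorm A :=
  norm_nonneg _

lemma frobNorm_eq_sqrt_trace {n1 n2 : ℕ} (A : Matrix (Fin n1) (Fin n2) ℝ) :
    frobNorm A = Real.sqrt ((Aᵀ * A).trace) := by
  unfold frobNorm
  congr 1
  rw [Matrix.trace, Finset.sum_comm]
  simp [Matrix.diag, Matrix.mul_apply, sq]

lemma frobNorm_sq_eq_trace {n1 n2 : ℕ} (A : Matrix (Fin n1) (Fin n2) ℝ) :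
    frobNorm A ^ 2 = (Aᵀ * A).trace := by
  rw [frobNorm_eq_sqrt_trace, Real.sq_sqrt]
  rw [Matrix.trace]
  apply Finset.sum_nonneg
  intro j _
  simp only [Matrix.diag, Matrix.mul_apply, Matrix.transpose_apply]
  exact Finset.sum_nonneg fun i _ => mul_self_nonneg _

lemma trace_transpose_mul_self_nonneg {n1 n2 : ℕ} (A : Matrix (Fin n1) (Fin n2) ℝ) :
    0 ≤ (Aᵀ * A).trace := by
  rw [← frobNorm_sq_eq_trace]; exact sq_nonneg _

lemma frobNorm_transpose {n1 n2 : ℕ} (A : Matrix (Fin n1) (Fin n2) ℝ) :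
    frobNorm Aᵀ = frobNorm A := by
  unfold frobNorm
  rw [Finset.sum_comm]
  rfl

lemma frobNorm_neg {n1 n2 : ℕ} (A : Matrix (Fin n1) (Fin n2) ℝ) :
    frobNorm (-A) = frobNorm A := by
  unfold frobNorm; simp

lemma frobNorm_eq_norm {n1 n2 : ℕ} (A : Matrix (Fin n1) (Fin n2) ℝ) :
    frobNorm A = ‖(show EuclideanSpace ℝ (Fin n1 × Fin n2) from WithLp.toLp 2 (fun p : Fin n1 × Fin n2 => A p.1 p.2))‖ := by
  rw [EuclideanSpace.norm_eq, frobNorm]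
  congr 1
  rw [Fintype.sum_prod_type]
  simp [sq_abs]

lemma frobNorm_add_le {n1 n2 : ℕ} (A B : Matrix (Fin n1) (Fin n2) ℝ) :
    frobNorm (A + B) ≤ frobNorm A + frobNorm B := by
  rw [frobNorm_eq_norm, frobNorm_eq_norm, frobNorm_eq_norm]
  exact norm_add_le (E := EuclideanSpace ℝ (Fin n1 × Fin n2))
    (WithLp.toLp 2 (fun p : Fin n1 × Fin n2 => A p.1 p.2))
    (WithLp.toLp 2 (fun p : Fin n1 × Fin n2 => B p.1 p.2))

open scoped Matrix.Norms.L2Operator in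
lemma specNorm_transpose {n1 n2 : ℕ} (A : Matrix (Fin n1) (Fin n2) ℝ) :
    specNorm Aᵀ = specNorm A := by
  have h : Aᵀ = Aᴴ := by ext i j; simp [Matrix.conjTranspose_apply]
  show ‖Aᵀ‖ = ‖A‖
  rw [h, Matrix.l2_opNorm_conjTranspose]

open scoped Matrix.Norms.L2Operator in
lemma frobNorm_mul_le_left {n1 n2 n3 : ℕ} (X : Matrix (Fin n1) (Fin n2) ℝ)
    (Y : Matrix (Fin n2) (Fin n3) ℝ) :
    frobNorm (X * Y) ≤ specNorm X * frobNorm Y := by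
  have hX : specNorm X = ‖X‖ := rfl
  have key : ∑ j, ∑ i, (X * Y) i j ^ 2 ≤ ‖X‖ ^ 2 * ∑ j, ∑ i, Y i j ^ 2 := by
    rw [Finset.mul_sum]
    apply Finset.sum_le_sum
    intro j _
    have h1 : ∑ i, (X * Y) i j ^ 2
        = ‖(show EuclideanSpace ℝ (Fin n1) from WithLp.toLp 2 (fun i => (X * Y) i j))‖ ^ 2 := by
      rw [EuclideanSpace.norm_eq, Real.sq_sqrt (Finset.sum_nonneg fun i _ => sq_nonneg _)]
      simp [sq_abs]
    have h2 : ∑ i, Y i j ^ 2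
        = ‖(show EuclideanSpace ℝ (Fin n2) from WithLp.toLp 2 (fun i => Y i j))‖ ^ 2 := by
      rw [EuclideanSpace.norm_eq, Real.sq_sqrt (Finset.sum_nonneg fun i _ => sq_nonneg _)]
      simp [sq_abs]
    rw [h1, h2, ← mul_pow]
    have hmv : (show EuclideanSpace ℝ (Fin n1) from WithLp.toLp 2 (fun i => (X * Y) i j))
        = (EuclideanSpace.equiv (Fin n1) ℝ).symm
            (X *ᵥ (show EuclideanSpace ℝ (Fin n2) from WithLp.toLp 2 (fun i => Y i j))) := by
      ext i
      simp [Matrix.mul_apply, Matrix.mulVec, dotProduct]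
    have := Matrix.l2_opNorm_mulVec X (show EuclideanSpace ℝ (Fin n2) from WithLp.toLp 2 (fun i => Y i j))
    rw [← hmv] at this
    exact pow_le_pow_left₀ (norm_nonneg _) this 2
  rw [hX]
  unfold frobNorm
  rw [Finset.sum_comm]
  calc Real.sqrt (∑ j, ∑ i, (X * Y) i j ^ 2)
      ≤ Real.sqrt (‖X‖ ^ 2 * ∑ j, ∑ i, Y i j ^ 2) := Real.sqrt_le_sqrt key
    _ = ‖X‖ * Real.sqrt (∑ i, ∑ j, Y i j ^ 2) := by
        rw [Real.sqrt_mul (sq_nonneg _), Real.sqrt_sq (norm_nonneg _), Finset.sum_comm]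

lemma frobNorm_mul_le_right {n1 n2 n3 : ℕ} (Y : Matrix (Fin n1) (Fin n2) ℝ)
    (X : Matrix (Fin n2) (Fin n3) ℝ) :
    frobNorm (Y * X) ≤ frobNorm Y * specNorm X := by
  calc frobNorm (Y * X) = frobNorm ((Y * X)ᵀ) := (frobNorm_transpose _).symm
    _ = frobNorm (Xᵀ * Yᵀ) := by rw [Matrix.transpose_mul]
    _ ≤ specNorm Xᵀ * frobNorm Yᵀ := frobNorm_mul_le_left _ _
    _ = frobNorm Y * specNorm X := by
        rw [specNorm_transpose, frobNorm_transpose]; ring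

lemma trace_eq_rank_of_idem {n : ℕ} (P : Matrix (Fin n) (Fin n) ℝ) (h : P * P = P) :
    P.trace = (P.rank : ℝ) := by
  have hf : P.mulVecLin ∘ₗ P.mulVecLin = P.mulVecLin := by
    rw [← Matrix.mulVecLin_mul, h]
  have hproj : LinearMap.IsProj (LinearMap.range P.mulVecLin) P.mulVecLin := by
    constructor
    · intro x; exact LinearMap.mem_range_self _ x
    · rintro x ⟨y, rfl⟩
      exact congrFun (congrArg DFunLike.coe hf) y
  have htr := hproj.trace
  rw [Matrix.rank, ← htr, LinearMap.trace_eq_matrix_trace ℝ (Pi.basisFun ℝ (Fin n))]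
  congr 1
  rw [LinearMap.toMatrix_eq_toMatrix', ← Matrix.toLin'_apply' P, LinearMap.toMatrix'_toLin']

lemma sub_proj_idem {n : ℕ} (Q : Matrix (Fin n) (Fin n) ℝ) (h : Q * Q = Q) :
    ((1 : Matrix (Fin n) (Fin n) ℝ) - Q) * (1 - Q) = 1 - Q := by
  simp only [Matrix.sub_mul, Matrix.mul_sub, Matrix.one_mul, Matrix.mul_one, h]
  abel

lemma frobNorm_proj_left {n m : ℕ} (P : Matrix (Fin n) (Fin n) ℝ)
    (hs : Pᵀ = P) (hi : P * P = P) (M : Matrix (Fin n) (Fin m) ℝ) :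
    frobNorm ((1 - P) * M) ≤ frobNorm M := by
  rw [frobNorm_eq_sqrt_trace, frobNorm_eq_sqrt_trace]
  apply Real.sqrt_le_sqrt
  have h1 : ((1 - P) * M)ᵀ * ((1 - P) * M) = Mᵀ * ((1 - P) * M) := by
    rw [Matrix.transpose_mul, Matrix.transpose_sub, Matrix.transpose_one, hs,
      Matrix.mul_assoc, ← Matrix.mul_assoc (1 - P), sub_proj_idem P hi]
  rw [h1]
  have h2 : Mᵀ * ((1 - P) * M) = Mᵀ * M - (P * M)ᵀ * (P * M) := by
    rw [Matrix.transpose_mul, hs, Matrix.sub_mul, Matrix.one_mul, Matrix.mul_sub]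
    rw [show Mᵀ * (P * M) = (Mᵀ * P) * (P * M) from by
      rw [Matrix.mul_assoc, ← Matrix.mul_assoc P P M, hi]]
  rw [h2, Matrix.trace_sub]
  have := trace_transpose_mul_self_nonneg (P * M)
  linarith

lemma frobNorm_proj_right {n m : ℕ} (Q : Matrix (Fin m) (Fin m) ℝ)
    (hs : Qᵀ = Q) (hi : Q * Q = Q) (M : Matrix (Fin n) (Fin m) ℝ) :
    frobNorm (M * (1 - Q)) ≤ frobNorm M := by
  calc frobNorm (M * (1 - Q)) = frobNorm ((M * (1 - Q))ᵀ) := (frobNorm_transpose _).symm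
    _ = frobNorm ((1 - Q) * Mᵀ) := by
        rw [Matrix.transpose_mul, Matrix.transpose_sub, Matrix.transpose_one, hs]
    _ ≤ frobNorm Mᵀ := frobNorm_proj_left Q hs hi Mᵀ
    _ = frobNorm M := frobNorm_transpose _

lemma frob_swap {n : ℕ} (P Q : Matrix (Fin n) (Fin n) ℝ)
    (hPs : Pᵀ = P) (hPi : P * P = P) (hQs : Qᵀ = Q) (hQi : Q * Q = Q)
    (htr : P.trace = Q.trace) :
    frobNorm (P * (1 - Q)) = frobNorm ((1 - P) * Q) := by
  rw [frobNorm_eq_sqrt_trace, frobNorm_eq_sqrt_trace]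
  congr 1
  have e1 : ((P * (1 - Q))ᵀ * (P * (1 - Q))).trace = P.trace - (P * Q).trace := by
    have h1 : (P * (1 - Q))ᵀ * (P * (1 - Q)) = (1 - Q) * (P * (1 - Q)) := by
      rw [Matrix.transpose_mul, Matrix.transpose_sub, Matrix.transpose_one, hPs, hQs,
        Matrix.mul_assoc, ← Matrix.mul_assoc P P, hPi]
    rw [h1, Matrix.trace_mul_comm, Matrix.mul_assoc, sub_proj_idem Q hQi,
      Matrix.mul_sub, Matrix.mul_one, Matrix.trace_sub]
  have e2 : (((1 - P) * Q)ᵀ * ((1 - P) * Q)).trace = Q.trace - (P * Q).trace := by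
    have h1 : ((1 - P) * Q)ᵀ * ((1 - P) * Q) = Q * ((1 - P) * Q) := by
      rw [Matrix.transpose_mul, Matrix.transpose_sub, Matrix.transpose_one, hPs, hQs,
        Matrix.mul_assoc, ← Matrix.mul_assoc (1 - P), sub_proj_idem P hPi]
    rw [h1, Matrix.trace_mul_comm, Matrix.mul_assoc, hQi, Matrix.sub_mul, Matrix.one_mul,
      Matrix.trace_sub]
  rw [e1, e2, htr]

end WedinAux

end WedinAux

set_option maxHeartbeats 1000000 in
/-- Wedin's pseudoinverse perturbation bound for matrices of equal
rank, and the pseudoinverse of a compact SVD. -/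
theorem statement10 :
    (∀ (p q : ℕ) (A B : Matrix (Fin p) (Fin q) ℝ)
      (Ap Bp : Matrix (Fin q) (Fin p) ℝ),
      A.rank = B.rank → IsMoorePenrose A Ap → IsMoorePenrose B Bp →
      frobNorm (Bp - Ap) ≤ 3 * specNorm Bp * specNorm Ap * frobNorm (B - A)) ∧
    (∀ (p q r : ℕ) (A : Matrix (Fin p) (Fin q) ℝ)
      (U : Matrix (Fin p) (Fin r) ℝ) (S : Matrix (Fin r) (Fin r) ℝ)
      (W : Matrix (Fin q) (Fin r) ℝ),
      IsCompactSVD A U S W → IsMoorePenrose A (W * S⁻¹ * Uᵀ)) := by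
  classical
  constructor
  · intro p q A B Ap Bp hrank hA hB
    obtain ⟨hA1, hA2, hA3, hA4⟩ := hA
    obtain ⟨hB1, hB2, hB3, hB4⟩ := hB
    set E := B - A with hE
    set sA := specNorm Ap with hsA
    set sB := specNorm Bp with hsB
    set fE := frobNorm E with hfE
    have hsA0 : 0 ≤ sA := WedinAux.specNorm_nonneg _
    have hsB0 : 0 ≤ sB := WedinAux.specNorm_nonneg _
    have hfE0 : 0 ≤ fE := WedinAux.frobNorm_nonneg _
    -- projections
    have hPBs : (B * Bp)ᵀ = B * Bp := hB3
    have hPBi : (B * Bp) * (B * Bp) = B * Bp := by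
      rw [← Matrix.mul_assoc (B * Bp) B Bp, hB1]
    have hQAs : (A * Ap)ᵀ = A * Ap := hA3
    have hQAi : (A * Ap) * (A * Ap) = A * Ap := by
      rw [← Matrix.mul_assoc (A * Ap) A Ap, hA1]
    have hPB's : (Bp * B)ᵀ = Bp * B := hB4
    have hPB'i : (Bp * B) * (Bp * B) = Bp * B := by
      rw [← Matrix.mul_assoc (Bp * B) Bp B, hB2]
    have hQA's : (Ap * A)ᵀ = Ap * A := hA4
    have hQA'i : (Ap * A) * (Ap * A) = Ap * A := by
      rw [← Matrix.mul_assoc (Ap * A) Ap A, hA2]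
    -- equal traces via rank
    have hrk : ∀ (C : Matrix (Fin p) (Fin q) ℝ) (Cp : Matrix (Fin q) (Fin p) ℝ),
        C * Cp * C = C → (C * Cp).rank = C.rank := by
      intro C Cp h1
      refine le_antisymm (Matrix.rank_mul_le_left C Cp) ?_
      conv_lhs => rw [← h1]
      exact Matrix.rank_mul_le_left (C * Cp) C
    have htrPQ : (B * Bp).trace = (A * Ap).trace := by
      rw [WedinAux.trace_eq_rank_of_idem _ hPBi, WedinAux.trace_eq_rank_of_idem _ hQAi,
        hrk B Bp hB1, hrk A Ap hA1, hrank]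
    have htrPQ' : (Bp * B).trace = (Ap * A).trace := by
      rw [Matrix.trace_mul_comm Bp B, Matrix.trace_mul_comm Ap A]; exact htrPQ
    -- the three-term identity
    have hEq : Bp - Ap = -(Bp * E * Ap) + Bp * (1 - A * Ap) - (1 - Bp * B) * Ap := by
      rw [hE]
      simp only [Matrix.mul_sub, Matrix.sub_mul, Matrix.mul_one, Matrix.one_mul,
        Matrix.mul_assoc]
      abel
    -- Term 1 bound
    have hb1 : frobNorm (Bp * E * Ap) ≤ sB * (fE * sA) := by
      calc frobNorm (Bp * E * Ap) = frobNorm (Bp * (E * Ap)) := by rw [Matrix.mul_assoc]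
        _ ≤ sB * frobNorm (E * Ap) := WedinAux.frobNorm_mul_le_left _ _
        _ ≤ sB * (fE * sA) := by
            have := WedinAux.frobNorm_mul_le_right E Ap
            exact mul_le_mul_of_nonneg_left this hsB0
    -- Term 2 bound
    have hb2 : frobNorm (Bp * (1 - A * Ap)) ≤ sB * (fE * sA) := by
      have hBp : Bp = Bp * (B * Bp) := by rw [← Matrix.mul_assoc, hB2]
      have step1 : Bp * (1 - A * Ap) = Bp * ((B * Bp) * (1 - A * Ap)) := by
        conv_lhs => rw [hBp]
        rw [Matrix.mul_assoc]
      have hswap : frobNorm ((B * Bp) * (1 - A * Ap)) = frobNorm ((1 - B * Bp) * (A * Ap)) :=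
        WedinAux.frob_swap _ _ hPBs hPBi hQAs hQAi htrPQ
      have hrewr : (1 - B * Bp) * (A * Ap) = -((1 - (B * Bp)) * (E * Ap)) := by
        have hz : (1 - B * Bp) * B = 0 := by
          rw [Matrix.sub_mul, Matrix.one_mul, hB1, sub_self]
        have h0 : (1 - B * Bp) * A = -((1 - B * Bp) * E) := by
          rw [hE, Matrix.mul_sub, hz, zero_sub, neg_neg]
        calc (1 - B * Bp) * (A * Ap) = ((1 - B * Bp) * A) * Ap := by rw [Matrix.mul_assoc]
          _ = -((1 - B * Bp) * E) * Ap := by rw [h0]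
          _ = -((1 - B * Bp) * (E * Ap)) := by rw [Matrix.neg_mul, Matrix.mul_assoc]
      have hs1 : (1 - B * Bp)ᵀ = 1 - B * Bp := by
        rw [Matrix.transpose_sub, Matrix.transpose_one, hPBs]
      have hi1 : (1 - B * Bp) * (1 - B * Bp) = 1 - B * Bp :=
        WedinAux.sub_proj_idem (B * Bp) hPBi
      have hproj : frobNorm ((1 - B * Bp) * (E * Ap)) ≤ frobNorm (E * Ap) :=
        WedinAux.frobNorm_proj_left (B * Bp) hPBs hPBi (E * Ap)
      have hmr : frobNorm (E * Ap) ≤ fE * sA := WedinAux.frobNorm_mul_le_right E Ap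
      have hml : frobNorm (Bp * ((B * Bp) * (1 - A * Ap)))
          ≤ sB * frobNorm ((B * Bp) * (1 - A * Ap)) :=
        WedinAux.frobNorm_mul_le_left Bp ((B * Bp) * (1 - A * Ap))
      have heqn : frobNorm ((1 - B * Bp) * (A * Ap)) = frobNorm ((1 - B * Bp) * (E * Ap)) := by
        rw [hrewr, WedinAux.frobNorm_neg]
      rw [step1]
      rw [hswap, heqn] at hml
      have : frobNorm ((1 - B * Bp) * (E * Ap)) ≤ fE * sA := le_trans hproj hmr
      nlinarith [WedinAux.frobNorm_nonneg ((1 - B * Bp) * (E * Ap))]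
    -- Term 3 bound
    have hb3 : frobNorm ((1 - Bp * B) * Ap) ≤ sB * (fE * sA) := by
      have hAp : Ap = (Ap * A) * Ap := by rw [hA2]
      have step1 : (1 - Bp * B) * Ap = ((1 - Bp * B) * (Ap * A)) * Ap := by
        conv_lhs => rw [hAp, ← Matrix.mul_assoc]
      have hswap : frobNorm ((1 - Bp * B) * (Ap * A)) = frobNorm ((Bp * B) * (1 - Ap * A)) :=
        (WedinAux.frob_swap _ _ hPB's hPB'i hQA's hQA'i htrPQ').symm
      have hrewr : (Bp * B) * (1 - Ap * A) = Bp * (E * (1 - Ap * A)) := by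
        have hz : A * (1 - Ap * A) = 0 := by
          rw [Matrix.mul_sub, Matrix.mul_one, ← Matrix.mul_assoc A Ap A, hA1, sub_self]
        have h0 : B * (1 - Ap * A) = E * (1 - Ap * A) := by
          rw [hE, Matrix.sub_mul, hz, sub_zero]
        rw [Matrix.mul_assoc, h0]
      have hmr : frobNorm (((1 - Bp * B) * (Ap * A)) * Ap)
          ≤ frobNorm ((1 - Bp * B) * (Ap * A)) * sA :=
        WedinAux.frobNorm_mul_le_right ((1 - Bp * B) * (Ap * A)) Ap
      have hml : frobNorm (Bp * (E * (1 - Ap * A)))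
          ≤ sB * frobNorm (E * (1 - Ap * A)) :=
        WedinAux.frobNorm_mul_le_left Bp (E * (1 - Ap * A))
      have hproj : frobNorm (E * (1 - Ap * A)) ≤ fE :=
        WedinAux.frobNorm_proj_right (Ap * A) hQA's hQA'i E
      rw [step1]
      rw [hswap, hrewr] at hmr
      have h1 : frobNorm (Bp * (E * (1 - Ap * A))) ≤ sB * fE := by
        calc frobNorm (Bp * (E * (1 - Ap * A))) ≤ sB * frobNorm (E * (1 - Ap * A)) := hml
          _ ≤ sB * fE := mul_le_mul_of_nonneg_left hproj hsB0
      calc frobNorm ((1 - Bp * B) * (Ap * A) * Ap)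
          ≤ frobNorm (Bp * (E * (1 - Ap * A))) * sA := hmr
        _ ≤ (sB * fE) * sA := mul_le_mul_of_nonneg_right h1 hsA0
        _ = sB * (fE * sA) := by ring
    -- combine
    have htri : frobNorm (Bp - Ap)
        ≤ frobNorm (Bp * E * Ap) + frobNorm (Bp * (1 - A * Ap))
          + frobNorm ((1 - Bp * B) * Ap) := by
      rw [hEq, sub_eq_add_neg]
      calc frobNorm (-(Bp * E * Ap) + Bp * (1 - A * Ap) + -((1 - Bp * B) * Ap))
          ≤ frobNorm (-(Bp * E * Ap) + Bp * (1 - A * Ap))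
            + frobNorm (-((1 - Bp * B) * Ap)) := WedinAux.frobNorm_add_le _ _
        _ ≤ frobNorm (-(Bp * E * Ap)) + frobNorm (Bp * (1 - A * Ap))
            + frobNorm (-((1 - Bp * B) * Ap)) := by
            have := WedinAux.frobNorm_add_le (-(Bp * E * Ap)) (Bp * (1 - A * Ap))
            linarith
        _ = frobNorm (Bp * E * Ap) + frobNorm (Bp * (1 - A * Ap))
            + frobNorm ((1 - Bp * B) * Ap) := by
            rw [WedinAux.frobNorm_neg, WedinAux.frobNorm_neg]
    have : frobNorm (Bp - Ap) ≤ 3 * (sB * (fE * sA)) := by linarith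
    calc frobNorm (Bp - Ap) ≤ 3 * (sB * (fE * sA)) := this
      _ = 3 * specNorm Bp * specNorm Ap * frobNorm (B - A) := by rw [hsB, hsA, hfE, hE]; ring
  · intro p q r A U S W h
    obtain ⟨hA, hU, hW, hdiag, hpos⟩ := h
    have hSd : S = Matrix.diagonal (fun i => S i i) := by
      ext i j
      by_cases hij : i = j
      · subst hij; simp
      · rw [Matrix.diagonal_apply_ne _ hij]; exact hdiag i j hij
    have hdet : IsUnit S.det := by
      rw [isUnit_iff_ne_zero, hSd, Matrix.det_diagonal]
      exact (Finset.prod_pos fun i _ => hpos i).ne'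
    have h1 : S * S⁻¹ = 1 := Matrix.mul_nonsing_inv S hdet
    have h2 : S⁻¹ * S = 1 := Matrix.nonsing_inv_mul S hdet
    have key1 : A * (W * S⁻¹ * Uᵀ) = U * Uᵀ := by
      rw [hA]
      simp only [Matrix.mul_assoc]
      rw [show Wᵀ * (W * (S⁻¹ * Uᵀ)) = S⁻¹ * Uᵀ from by
        rw [← Matrix.mul_assoc, hW, Matrix.one_mul]]
      rw [show S * (S⁻¹ * Uᵀ) = Uᵀ from by rw [← Matrix.mul_assoc, h1, Matrix.one_mul]]
    have key2 : (W * S⁻¹ * Uᵀ) * A = W * Wᵀ := by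
      rw [hA]
      simp only [Matrix.mul_assoc]
      rw [show Uᵀ * (U * (S * Wᵀ)) = S * Wᵀ from by
        rw [← Matrix.mul_assoc, hU, Matrix.one_mul]]
      rw [show S⁻¹ * (S * Wᵀ) = Wᵀ from by rw [← Matrix.mul_assoc, h2, Matrix.one_mul]]
    refine ⟨?_, ?_, ?_, ?_⟩
    · rw [key1, hA]
      simp only [Matrix.mul_assoc]
      rw [show Uᵀ * (U * (S * Wᵀ)) = S * Wᵀ from by
        rw [← Matrix.mul_assoc, hU, Matrix.one_mul]]
    · rw [key2]
      simp only [Matrix.mul_assoc]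
      rw [show Wᵀ * (W * (S⁻¹ * Uᵀ)) = S⁻¹ * Uᵀ from by
        rw [← Matrix.mul_assoc, hW, Matrix.one_mul]]
    · rw [key1, Matrix.transpose_mul, Matrix.transpose_transpose]
    · rw [key2, Matrix.transpose_mul, Matrix.transpose_transpose]
end

section
/- Let 𝒜 : ℝ^{n1×n2} → ℝ^m be a measurement operator satisfying the rank-(r+1) RIP with constant δ ∈ (0,1). Then for all unit vectors w ∈ ℝ^{n1}, v ∈ ℝ^{n2} and every Z ∈ ℝ^{n1×n2} with rank(Z) ≤ r, |⟨𝒜(wvᵀ), 𝒜(𝒫_{wvᵀ,⊥}(Z))⟩| ≤ δ‖Z‖_F. -/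
open Matrix MeasureTheory ProbabilityTheory
open scoped BigOperators

noncomputable section

/-- Projection onto the direction `w vᵀ` : `𝒫_{wvᵀ}(Z) = ⟨wvᵀ, Z⟩ wvᵀ`. -/
def projWV {n1 n2 : ℕ} (w : Fin n1 → ℝ) (v : Fin n2 → ℝ)
    (Z : Matrix (Fin n1) (Fin n2) ℝ) : Matrix (Fin n1) (Fin n2) ℝ :=
  frobInner (Matrix.vecMulVec w v) Z • Matrix.vecMulVec w v

/-- `𝒫_{wvᵀ,⊥}(Z) = Z − ⟨wvᵀ, Z⟩ wvᵀ`. -/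
def projWVperp {n1 n2 : ℕ} (w : Fin n1 → ℝ) (v : Fin n2 → ℝ)
    (Z : Matrix (Fin n1) (Fin n2) ℝ) : Matrix (Fin n1) (Fin n2) ℝ :=
  Z - projWV w v Z

/-- The virtual measurement operator `𝒜_{(w,v)} : ℝ^{n1×n2} → ℝ^{m+1}`. -/
def virtOp {n1 n2 m : ℕ} (A : Fin m → Matrix (Fin n1) (Fin n2) ℝ)
    (w : Fin n1 → ℝ) (v : Fin n2 → ℝ) (Z : Matrix (Fin n1) (Fin n2) ℝ) :
    Fin (m + 1) → ℝ :=
  fun i => if h : (i : ℕ) < m then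
      (Real.sqrt m)⁻¹ * frobInner (projWVperp w v (A ⟨(i : ℕ), h⟩)) Z
    else frobInner (Matrix.vecMulVec w v) Z

/-- Adjoint of the virtual measurement operator. -/
def virtAdj {n1 n2 m : ℕ} (A : Fin m → Matrix (Fin n1) (Fin n2) ℝ)
    (w : Fin n1 → ℝ) (v : Fin n2 → ℝ) (u : Fin (m + 1) → ℝ) :
    Matrix (Fin n1) (Fin n2) ℝ :=
  (Real.sqrt m)⁻¹ • (∑ i : Fin m, u i.castSucc • projWVperp w v (A i))
    + u (Fin.last m) • Matrix.vecMulVec w v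

/-- The composite operator `𝒜*_{(w,v)} 𝒜_{(w,v)}`. -/
def virtAA {n1 n2 m : ℕ} (A : Fin m → Matrix (Fin n1) (Fin n2) ℝ)
    (w : Fin n1 → ℝ) (v : Fin n2 → ℝ) (Z : Matrix (Fin n1) (Fin n2) ℝ) :
    Matrix (Fin n1) (Fin n2) ℝ :=
  virtAdj A w v (virtOp A w v Z)

end

section Stmt12Aux

variable {n1 n2 : ℕ}

lemma frobInner_eq_sum (A B : Matrix (Fin n1) (Fin n2) ℝ) :
    frobInner A B = ∑ i, ∑ j, A i j * B i j := by
  rw [frobInner, Matrix.trace]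
  simp only [Matrix.diag, Matrix.mul_apply, Matrix.transpose_apply]
  exact Finset.sum_comm

lemma frobInner_add_right (A B C : Matrix (Fin n1) (Fin n2) ℝ) :
    frobInner A (B + C) = frobInner A B + frobInner A C := by
  simp [frobInner_eq_sum, Matrix.add_apply, mul_add, Finset.sum_add_distrib]

lemma frobInner_sub_right (A B C : Matrix (Fin n1) (Fin n2) ℝ) :
    frobInner A (B - C) = frobInner A B - frobInner A C := by
  simp [frobInner_eq_sum, Matrix.sub_apply, mul_sub, Finset.sum_sub_distrib]

lemma frobInner_smul_right (c : ℝ) (A B : Matrix (Fin n1) (Fin n2) ℝ) :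
    frobInner A (c • B) = c * frobInner A B := by
  simp [frobInner_eq_sum, Matrix.smul_apply, Finset.mul_sum]
  congr 1; ext i; congr 1; ext j; ring

lemma frobInner_smul_left (c : ℝ) (A B : Matrix (Fin n1) (Fin n2) ℝ) :
    frobInner (c • A) B = c * frobInner A B := by
  simp [frobInner_eq_sum, Matrix.smul_apply, Finset.mul_sum]
  congr 1; ext i; congr 1; ext j; ring

lemma frobInner_comm (A B : Matrix (Fin n1) (Fin n2) ℝ) :
    frobInner A B = frobInner B A := by
  simp [frobInner_eq_sum, mul_comm]

lemma frobNorm_nonneg (A : Matrix (Fin n1) (Fin n2) ℝ) : 0 ≤ frobNorm A :=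
  Real.sqrt_nonneg _

lemma frobNorm_sq (A : Matrix (Fin n1) (Fin n2) ℝ) :
    frobNorm A ^ 2 = frobInner A A := by
  rw [frobNorm, Real.sq_sqrt (by positivity), frobInner_eq_sum]
  congr 1; ext i; congr 1; ext j; ring

lemma vecNorm_sq_s12 {m : ℕ} (u : Fin m → ℝ) : vecNorm u ^ 2 = ∑ i, u i ^ 2 := by
  rw [vecNorm, Real.sq_sqrt (by positivity)]

lemma measOp_add {m : ℕ} (A : Fin m → Matrix (Fin n1) (Fin n2) ℝ)
    (B C : Matrix (Fin n1) (Fin n2) ℝ) (i : Fin m) :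
    measOp A (B + C) i = measOp A B i + measOp A C i := by
  simp [measOp, frobInner_add_right, mul_add]

lemma measOp_sub {m : ℕ} (A : Fin m → Matrix (Fin n1) (Fin n2) ℝ)
    (B C : Matrix (Fin n1) (Fin n2) ℝ) (i : Fin m) :
    measOp A (B - C) i = measOp A B i - measOp A C i := by
  simp [measOp, frobInner_sub_right, mul_sub]

lemma measOp_smul {m : ℕ} (A : Fin m → Matrix (Fin n1) (Fin n2) ℝ)
    (c : ℝ) (B : Matrix (Fin n1) (Fin n2) ℝ) (i : Fin m) :
    measOp A (c • B) i = c * measOp A B i := by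
  simp [measOp, frobInner_smul_right]; ring

lemma rank_add_le' (A B : Matrix (Fin n1) (Fin n2) ℝ) :
    (A + B).rank ≤ A.rank + B.rank := by
  rw [Matrix.rank, Matrix.rank, Matrix.rank, Matrix.mulVecLin_add]
  have h : LinearMap.range (A.mulVecLin + B.mulVecLin) ≤
      LinearMap.range A.mulVecLin ⊔ LinearMap.range B.mulVecLin := by
    rintro x ⟨y, rfl⟩
    exact Submodule.add_mem_sup ⟨y, rfl⟩ ⟨y, rfl⟩
  exact (Submodule.finrank_mono h).trans
    (Submodule.finrank_add_le_finrank_add_finrank _ _)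

lemma rank_smul_le' (c : ℝ) (A : Matrix (Fin n1) (Fin n2) ℝ) :
    (c • A).rank ≤ A.rank := by
  rw [Matrix.rank, Matrix.rank]
  have h : LinearMap.range (c • A).mulVecLin ≤ LinearMap.range A.mulVecLin := by
    rintro x ⟨y, rfl⟩
    refine ⟨c • y, ?_⟩
    simp [Matrix.mulVecLin, Matrix.smul_mulVec, Matrix.mulVec_smul]
  exact Submodule.finrank_mono h

lemma rank_vecMulVec_le' (w : Fin n1 → ℝ) (v : Fin n2 → ℝ) :
    (Matrix.vecMulVec w v).rank ≤ 1 := by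
  rw [Matrix.vecMulVec_eq (Fin 1)]
  exact (Matrix.rank_mul_le_left _ _).trans
    ((Matrix.rank_le_card_width _).trans (by simp))

end Stmt12Aux

/-- Under a rank-`(r+1)` RIP with constant `δ`, for unit vectors
`w, v` and any `Z` of rank at most `r`,
`|⟨𝒜(wvᵀ), 𝒜(𝒫_{wvᵀ,⊥}(Z))⟩| ≤ δ ‖Z‖_F`. -/
theorem statement12 {n1 n2 m r : ℕ}
    (A : Fin m → Matrix (Fin n1) (Fin n2) ℝ) (δ : ℝ)
    (hδ0 : 0 < δ) (hδ1 : δ < 1) (hRIP : HasRIP A (r + 1) δ)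
    (w : Fin n1 → ℝ) (v : Fin n2 → ℝ) (hw : vecNorm w = 1) (hv : vecNorm v = 1)
    (Z : Matrix (Fin n1) (Fin n2) ℝ) (hZ : Z.rank ≤ r) :
    |∑ i, measOp A (Matrix.vecMulVec w v) i * measOp A (projWVperp w v Z) i| ≤
      δ * frobNorm Z := by
  classical
  have hw2 : (∑ i, w i ^ 2) = 1 := by
    have := hw
    rw [vecNorm] at this
    nlinarith [Real.sq_sqrt (show (0:ℝ) ≤ ∑ i, w i ^ 2 by positivity), this]
  have hv2 : (∑ j, v j ^ 2) = 1 := by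
    have := hv
    rw [vecNorm] at this
    nlinarith [Real.sq_sqrt (show (0:ℝ) ≤ ∑ j, v j ^ 2 by positivity), this]
  set X := Matrix.vecMulVec w v with hXdef
  set c := frobInner X Z with hcdef
  set Y := projWVperp w v Z with hYdef0
  have hYdef : Y = Z - c • X := rfl
  have hXX : frobInner X X = 1 := by
    rw [frobInner_eq_sum]
    have : ∀ i : Fin n1, (∑ j, X i j * X i j) = w i ^ 2 * ∑ j, v j ^ 2 := by
      intro i
      rw [Finset.mul_sum]
      congr 1; ext j
      simp [hXdef, Matrix.vecMulVec_apply]; ring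
    rw [Finset.sum_congr rfl fun i _ => this i]
    rw [← Finset.sum_mul, hw2, hv2]; norm_num
  have hXY : frobInner X Y = 0 := by
    rw [hYdef, frobInner_sub_right, frobInner_smul_right, hXX, ← hcdef]; ring
  have hYY : frobInner Y Y = frobInner Z Z - c ^ 2 := by
    have h1 : frobInner Z X = c := by rw [frobInner_comm]
    rw [hYdef, frobInner_sub_right, frobInner_smul_right,
      frobInner_comm (Z - c • X) Z, frobInner_comm (Z - c • X) X,
      frobInner_sub_right, frobInner_sub_right, frobInner_smul_right,
      frobInner_smul_right, hXX, h1]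
    ring_nf
    linear_combination c * hcdef
  set t := frobNorm Y with htdef
  have ht0 : 0 ≤ t := frobNorm_nonneg Y
  have ht2 : t ^ 2 = frobInner Y Y := frobNorm_sq Y
  have hZnn : 0 ≤ frobNorm Z := frobNorm_nonneg Z
  rcases eq_or_lt_of_le ht0 with ht | ht
  · -- t = 0 : Y = 0
    have hYzero : Y = 0 := by
      have hsum : (∑ i, ∑ j, Y i j ^ 2) = 0 := by
        have : frobInner Y Y = 0 := by rw [← ht2, ← ht]; ring
        rw [frobInner_eq_sum] at this
        rw [← this]
        congr 1; ext i; congr 1; ext j; ring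
      ext i j
      have h1 : ∀ i ∈ Finset.univ, (0:ℝ) ≤ ∑ j, Y i j ^ 2 := fun i _ => by positivity
      have h2 := (Finset.sum_eq_zero_iff_of_nonneg h1).mp hsum i (Finset.mem_univ i)
      have h3 : ∀ j ∈ Finset.univ, (0:ℝ) ≤ Y i j ^ 2 := fun j _ => by positivity
      have h4 := (Finset.sum_eq_zero_iff_of_nonneg h3).mp h2 j (Finset.mem_univ j)
      exact pow_eq_zero_iff (by norm_num) |>.mp h4
    have : ∀ i, measOp A Y i = 0 := by
      intro i
      simp [measOp, frobInner_eq_sum, hYzero]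
    rw [show (∑ i, measOp A X i * measOp A Y i) = 0 by
      apply Finset.sum_eq_zero; intro i _; rw [this i]; ring]
    simpa using mul_nonneg hδ0.le hZnn
  · -- t > 0
    set Y' := t⁻¹ • Y with hY'def
    have htne : t ≠ 0 := ne_of_gt ht
    have hXY' : frobInner X Y' = 0 := by
      rw [hY'def, frobInner_smul_right, hXY]; ring
    have hY'Y' : frobInner Y' Y' = 1 := by
      rw [hY'def, frobInner_smul_right, frobInner_comm, frobInner_smul_right,
        ← ht2]
      field_simp
    -- rank bounds
    have hrank : ∀ α β : ℝ, (α • Z + β • X).rank ≤ r + 1 := by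
      intro α β
      calc (α • Z + β • X).rank ≤ (α • Z).rank + (β • X).rank := rank_add_le' _ _
        _ ≤ Z.rank + X.rank := add_le_add (rank_smul_le' _ _) (rank_smul_le' _ _)
        _ ≤ r + 1 := add_le_add hZ (rank_vecMulVec_le' w v)
    have hplus : X + Y' = t⁻¹ • Z + (1 - t⁻¹ * c) • X := by
      rw [hY'def, hYdef]; ext i j
      simp [Matrix.add_apply, Matrix.smul_apply, Matrix.sub_apply, smul_eq_mul]
      ring
    have hminus : X - Y' = (-t⁻¹) • Z + (1 + t⁻¹ * c) • X := by
      rw [hY'def, hYdef]; ext i j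
      simp [Matrix.add_apply, Matrix.smul_apply, Matrix.sub_apply, smul_eq_mul]
      ring
    have hrp : (X + Y').rank ≤ r + 1 := hplus ▸ hrank _ _
    have hrm : (X - Y').rank ≤ r + 1 := hminus ▸ hrank _ _
    -- Frobenius norms of X ± Y'
    have hnp : frobNorm (X + Y') ^ 2 = 2 := by
      rw [frobNorm_sq, frobInner_add_right, frobInner_comm (X + Y') X,
        frobInner_comm (X + Y') Y', frobInner_add_right, frobInner_add_right,
        hXX, hY'Y', frobInner_comm Y' X, hXY']
      ring
    have hnm : frobNorm (X - Y') ^ 2 = 2 := by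
      rw [frobNorm_sq, frobInner_sub_right, frobInner_comm (X - Y') X,
        frobInner_comm (X - Y') Y', frobInner_sub_right, frobInner_sub_right,
        hXX, hY'Y', frobInner_comm Y' X, hXY']
      ring
    obtain ⟨hp1, hp2⟩ := hRIP (X + Y') hrp
    obtain ⟨hm1, hm2⟩ := hRIP (X - Y') hrm
    rw [hnp] at hp1 hp2
    rw [hnm] at hm1 hm2
    set a := measOp A X with hadef
    set b := measOp A Y' with hbdef
    set S := ∑ i, a i * b i with hSdef
    have hvp : vecNorm (measOp A (X + Y')) ^ 2 = ∑ i, (a i)^2 + 2 * S + ∑ i, (b i)^2 := by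
      rw [vecNorm_sq_s12]
      have : ∀ i : Fin m, measOp A (X + Y') i ^ 2 = a i ^ 2 + 2 * (a i * b i) + b i ^ 2 := by
        intro i; rw [measOp_add]; ring
      rw [Finset.sum_congr rfl fun i _ => this i, Finset.sum_add_distrib,
        Finset.sum_add_distrib, ← Finset.mul_sum, ← hSdef]
    have hvm : vecNorm (measOp A (X - Y')) ^ 2 = ∑ i, (a i)^2 - 2 * S + ∑ i, (b i)^2 := by
      rw [vecNorm_sq_s12]
      have : ∀ i : Fin m, measOp A (X - Y') i ^ 2 = a i ^ 2 - 2 * (a i * b i) + b i ^ 2 := by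
        intro i; rw [measOp_sub]; ring
      rw [Finset.sum_congr rfl fun i _ => this i]
      rw [show (fun i => a i ^ 2 - 2 * (a i * b i) + b i ^ 2) =
        (fun i => (a i ^ 2 - 2 * (a i * b i)) + b i ^ 2) from rfl, Finset.sum_add_distrib,
        Finset.sum_sub_distrib, ← Finset.mul_sum, ← hSdef]
    rw [hvp] at hp1 hp2
    rw [hvm] at hm1 hm2
    have hSbound : |S| ≤ δ := by
      rw [abs_le]; constructor <;> linarith
    -- relate goal to S
    have hYsc : Y = t • Y' := by
      rw [hY'def, smul_smul]
      field_simp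
      rw [one_smul]
    have hYsc' : projWVperp w v Z = t • Y' := by rw [← hYdef0]; exact hYsc
    have hterm : ∀ i : Fin m, measOp A X i * measOp A (projWVperp w v Z) i
        = t * (a i * b i) := by
      intro i; rw [hYsc', measOp_smul]; ring
    have hgoal : (∑ i, measOp A X i * measOp A (projWVperp w v Z) i) = t * S := by
      rw [Finset.sum_congr rfl fun i _ => hterm i, ← Finset.mul_sum, hSdef]
    have hgoal2 : (∑ i, a i * measOp A Y i) = t * S := hgoal
    clear_value S b a Y' t Y c X
    rw [hgoal2, abs_mul, abs_of_pos ht]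
    have htZ : t ≤ frobNorm Z :=
      le_of_pow_le_pow_left₀ two_ne_zero hZnn
        (by rw [ht2, hYY, ← frobNorm_sq]; exact sub_le_self _ (sq_nonneg c))
    calc t * |S| ≤ t * δ := mul_le_mul_of_nonneg_left hSbound ht0
      _ = δ * t := mul_comm _ _
      _ ≤ δ * frobNorm Z := mul_le_mul_of_nonneg_left htZ hδ0.le
end

section
/- Let X⋆ ∈ ℝ^{n1×n2}, let L_t ∈ ℝ^{n1×r} and R_t ∈ ℝ^{n2×r} both have rank r, let X_t = L_tR_tᵀ have compact SVD X_t = V_tΣ_tW_tᵀ, set y = 𝒜(X⋆) and M_t := (𝒜*𝒜)(X⋆ − X_t), and let L_{t+1}, R_{t+1} be produced by one ScaledGD update with step size μ. Then L_t(L_tᵀL_t)^{-1}L_tᵀ = V_tV_tᵀ, R_t(R_tᵀR_t)^{-1}R_tᵀ = W_tW_tᵀ, R_t(R_tᵀR_t)^{-1}(L_tᵀL_t)^{-1}L_tᵀ = W_tΣ_t^{-1}V_tᵀ, and consequently L_{t+1}R_{t+1}ᵀ = X_t + μ·M_tW_tW_tᵀ + μ·V_tV_tᵀM_t + μ²·M_tW_tΣ_t^{-1}V_tᵀM_t.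 -/
open Matrix MeasureTheory ProbabilityTheory
open scoped BigOperators

noncomputable section

/-- One step of ScaledGD:
`L' = L + μ 𝒜*(y − 𝒜(LRᵀ)) R (RᵀR)⁻¹`, `R' = R + μ 𝒜*(y − 𝒜(LRᵀ))ᵀ L (LᵀL)⁻¹`. -/
def ScaledGDStep {n1 n2 r m : ℕ} (A : Fin m → Matrix (Fin n1) (Fin n2) ℝ)
    (y : Fin m → ℝ) (μ : ℝ)
    (L : Matrix (Fin n1) (Fin r) ℝ) (R : Matrix (Fin n2) (Fin r) ℝ)
    (L' : Matrix (Fin n1) (Fin r) ℝ) (R' : Matrix (Fin n2) (Fin r) ℝ) : Prop :=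
  L' = L + μ • (measAdj A (y - measOp A (L * Rᵀ)) * R * (Rᵀ * R)⁻¹) ∧
  R' = R + μ • ((measAdj A (y - measOp A (L * Rᵀ)))ᵀ * L * (Lᵀ * L)⁻¹)

end

section Statement16Aux

open Matrix

private lemma s16_range_top_of_rank {n r : ℕ} (B : Matrix (Fin r) (Fin n) ℝ) (h : B.rank = r) :
    LinearMap.range B.mulVecLin = ⊤ := by
  apply Submodule.eq_top_of_finrank_eq
  rw [← Matrix.rank, h, Module.finrank_fintype_fun_eq_card, Fintype.card_fin]

private lemma s16_isUnit_of_rank {r : ℕ} (Q : Matrix (Fin r) (Fin r) ℝ) (h : Q.rank = r) :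
    IsUnit Q := by
  rw [← Matrix.mulVec_surjective_iff_isUnit]
  exact LinearMap.range_eq_top.mp (s16_range_top_of_rank Q h)

private lemma s16_factor_through {n r s : ℕ} (V : Matrix (Fin n) (Fin r) ℝ)
    (L : Matrix (Fin n) (Fin s) ℝ) (hV : Vᵀ * V = 1)
    (h : LinearMap.range L.mulVecLin ≤ LinearMap.range V.mulVecLin) :
    V * (Vᵀ * L) = L := by
  ext i j
  have hc : (fun i => L i j) ∈ LinearMap.range L.mulVecLin :=
    ⟨Pi.single j 1, by simp [Matrix.mulVecLin_apply]; rfl⟩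
  obtain ⟨y, hy⟩ := h hc
  have hcol : (V * (Vᵀ * L)) *ᵥ Pi.single j 1 = L *ᵥ Pi.single j 1 := by
    have hLj : L *ᵥ Pi.single j 1 = fun i => L i j := by simp; rfl
    rw [← Matrix.mulVec_mulVec, ← Matrix.mulVec_mulVec, hLj, ← hy]
    simp only [Matrix.mulVecLin_apply] at hy ⊢
    rw [Matrix.mulVec_mulVec y Vᵀ V, hV, Matrix.one_mulVec]
  have := congrFun hcol i
  simpa using this

private lemma s16_range_mul_full {n1 n2 r : ℕ} (L : Matrix (Fin n1) (Fin r) ℝ)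
    (B : Matrix (Fin r) (Fin n2) ℝ) (hB : B.rank = r) :
    LinearMap.range (L * B).mulVecLin = LinearMap.range L.mulVecLin := by
  rw [Matrix.mulVecLin_mul, LinearMap.range_comp_of_range_eq_top _ (s16_range_top_of_rank B hB)]

private lemma s16_range_mul_le {n1 n2 r : ℕ} (V : Matrix (Fin n1) (Fin r) ℝ)
    (B : Matrix (Fin r) (Fin n2) ℝ) :
    LinearMap.range (V * B).mulVecLin ≤ LinearMap.range V.mulVecLin := by
  rw [Matrix.mulVecLin_mul, LinearMap.range_comp]
  exact LinearMap.map_le_range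

private lemma s16_sandwich {n1 n2 r : ℕ} (V : Matrix (Fin n1) (Fin r) ℝ)
    (W : Matrix (Fin n2) (Fin r) ℝ) (S : Matrix (Fin r) (Fin r) ℝ)
    (hV : Vᵀ * V = 1) (hW : Wᵀ * W = 1) :
    Vᵀ * (V * S * Wᵀ) * W = S := by
  calc Vᵀ * (V * S * Wᵀ) * W = (Vᵀ * V) * S * (Wᵀ * W) := by
        simp only [Matrix.mul_assoc]
      _ = S := by rw [hV, hW, Matrix.one_mul, Matrix.mul_one]


private lemma s16_gram {n r : ℕ} (V : Matrix (Fin n) (Fin r) ℝ)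
    (Q : Matrix (Fin r) (Fin r) ℝ) (hV : Vᵀ * V = 1) :
    (V * Q)ᵀ * (V * Q) = Qᵀ * Q := by
  rw [Matrix.transpose_mul, Matrix.mul_assoc, ← Matrix.mul_assoc Vᵀ V Q, hV, Matrix.one_mul]

private lemma s16_key1 {n r : ℕ} (V : Matrix (Fin n) (Fin r) ℝ)
    (Q : Matrix (Fin r) (Fin r) ℝ) (hV : Vᵀ * V = 1) (hQd : IsUnit Q.det) :
    (V * Q) * ((V * Q)ᵀ * (V * Q))⁻¹ * (V * Q)ᵀ = V * Vᵀ := by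
  have hQTd : IsUnit Qᵀ.det := by rwa [Matrix.det_transpose]
  rw [s16_gram V Q hV, Matrix.mul_inv_rev, Matrix.transpose_mul]
  simp only [Matrix.mul_assoc]
  rw [Matrix.nonsing_inv_mul_cancel_left Qᵀ Vᵀ hQTd,
    Matrix.mul_nonsing_inv_cancel_left Q Vᵀ hQd]

private lemma s16_key3 {n1 n2 r : ℕ} (V : Matrix (Fin n1) (Fin r) ℝ)
    (W : Matrix (Fin n2) (Fin r) ℝ) (Q P : Matrix (Fin r) (Fin r) ℝ)
    (hV : Vᵀ * V = 1) (hW : Wᵀ * W = 1) (hQd : IsUnit Q.det) (hPd : IsUnit P.det) :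
    (W * P) * ((W * P)ᵀ * (W * P))⁻¹ * ((V * Q)ᵀ * (V * Q))⁻¹ * (V * Q)ᵀ =
      W * (Q * Pᵀ)⁻¹ * Vᵀ := by
  have hQTd : IsUnit Qᵀ.det := by rwa [Matrix.det_transpose]
  rw [s16_gram V Q hV, s16_gram W P hW, Matrix.mul_inv_rev, Matrix.mul_inv_rev,
    Matrix.transpose_mul, Matrix.mul_inv_rev]
  simp only [Matrix.mul_assoc]
  rw [Matrix.nonsing_inv_mul_cancel_left Qᵀ Vᵀ hQTd,
    Matrix.mul_nonsing_inv_cancel_left P (Pᵀ⁻¹ * (Q⁻¹ * Vᵀ)) hPd]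

end Statement16Aux

/-- Algebraic identities for one ScaledGD update: the scaled Gram
projections equal `V_tV_tᵀ`, `W_tW_tᵀ`, `W_tΣ_t⁻¹V_tᵀ`, and the resulting product
formula for `L_{t+1}R_{t+1}ᵀ` with `M_t = (𝒜*𝒜)(X⋆ − X_t)`. -/
theorem statement16 {n1 n2 m r : ℕ}
    (A : Fin m → Matrix (Fin n1) (Fin n2) ℝ)
    (Xstar : Matrix (Fin n1) (Fin n2) ℝ)
    (L : Matrix (Fin n1) (Fin r) ℝ) (R : Matrix (Fin n2) (Fin r) ℝ)
    (hL : L.rank = r) (hR : R.rank = r)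
    (Vt : Matrix (Fin n1) (Fin r) ℝ) (St : Matrix (Fin r) (Fin r) ℝ)
    (Wt : Matrix (Fin n2) (Fin r) ℝ)
    (hsvd : IsCompactSVD (L * Rᵀ) Vt St Wt)
    (μ : ℝ) (hμ : 0 < μ)
    (M : Matrix (Fin n1) (Fin n2) ℝ)
    (hM : M = opAA A (Xstar - L * Rᵀ))
    (Lnext : Matrix (Fin n1) (Fin r) ℝ) (Rnext : Matrix (Fin n2) (Fin r) ℝ)
    (hstep : ScaledGDStep A (measOp A Xstar) μ L R Lnext Rnext) :
    L * (Lᵀ * L)⁻¹ * Lᵀ = Vt * Vtᵀ ∧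
    R * (Rᵀ * R)⁻¹ * Rᵀ = Wt * Wtᵀ ∧
    R * (Rᵀ * R)⁻¹ * (Lᵀ * L)⁻¹ * Lᵀ = Wt * St⁻¹ * Vtᵀ ∧
    Lnext * Rnextᵀ =
      L * Rᵀ + μ • (M * Wt * Wtᵀ) + μ • (Vt * Vtᵀ * M)
        + μ ^ 2 • (M * Wt * St⁻¹ * Vtᵀ * M) := by
  obtain ⟨hX, hVo, hWo, hSd, hSpos⟩ := hsvd
  obtain ⟨hLn, hRn⟩ := hstep
  -- ranks of transposes
  have hLT : Lᵀ.rank = r := by rw [Matrix.rank_transpose]; exact hL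
  have hRT : Rᵀ.rank = r := by rw [Matrix.rank_transpose]; exact hR
  -- column space inclusions
  have hrangeL : LinearMap.range L.mulVecLin ≤ LinearMap.range Vt.mulVecLin := by
    rw [← s16_range_mul_full L Rᵀ hRT, hX, Matrix.mul_assoc]
    exact s16_range_mul_le Vt (St * Wtᵀ)
  have hXT : R * Lᵀ = Wt * (Stᵀ * Vtᵀ) := by
    have := congrArg Matrix.transpose hX
    simpa [Matrix.transpose_mul, Matrix.mul_assoc] using this
  have hrangeR : LinearMap.range R.mulVecLin ≤ LinearMap.range Wt.mulVecLin := by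
    rw [← s16_range_mul_full R Lᵀ hLT, hXT]
    exact s16_range_mul_le Wt (Stᵀ * Vtᵀ)
  obtain ⟨Q, hQdef⟩ : ∃ Q, Q = Vtᵀ * L := ⟨_, rfl⟩
  obtain ⟨P, hPdef⟩ : ∃ P, P = Wtᵀ * R := ⟨_, rfl⟩
  have hQfac : Vt * Q = L := by rw [hQdef]; exact s16_factor_through Vt L hVo hrangeL
  have hPfac : Wt * P = R := by rw [hPdef]; exact s16_factor_through Wt R hWo hrangeR
  -- Q and P are invertible
  have hQr : Q.rank = r := by
    refine le_antisymm (Matrix.rank_le_width Q) ?_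
    calc r = L.rank := hL.symm
      _ = (Vt * Q).rank := by rw [hQfac]
      _ ≤ Q.rank := Matrix.rank_mul_le_right _ _
  have hPr : P.rank = r := by
    refine le_antisymm (Matrix.rank_le_width P) ?_
    calc r = R.rank := hR.symm
      _ = (Wt * P).rank := by rw [hPfac]
      _ ≤ P.rank := Matrix.rank_mul_le_right _ _
  have hQd : IsUnit Q.det := (Matrix.isUnit_iff_isUnit_det Q).mp (s16_isUnit_of_rank Q hQr)
  have hPd : IsUnit P.det := (Matrix.isUnit_iff_isUnit_det P).mp (s16_isUnit_of_rank P hPr)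
  -- St = Q * Pᵀ
  have hSQP : St = Q * Pᵀ := by
    have h1 : Vt * St * Wtᵀ = Vt * (Q * Pᵀ) * Wtᵀ := by
      rw [← hX]
      conv_lhs => rw [← hQfac, ← hPfac]
      simp only [Matrix.transpose_mul, Matrix.mul_assoc]
    calc St = Vtᵀ * (Vt * St * Wtᵀ) * Wt := (s16_sandwich Vt Wt St hVo hWo).symm
      _ = Vtᵀ * (Vt * (Q * Pᵀ) * Wtᵀ) * Wt := by rw [h1]
      _ = Q * Pᵀ := s16_sandwich Vt Wt (Q * Pᵀ) hVo hWo
  -- Gram matrices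
  -- the three projection identities
  have key1 : L * (Lᵀ * L)⁻¹ * Lᵀ = Vt * Vtᵀ := by
    conv_lhs => rw [← hQfac]
    exact s16_key1 Vt Q hVo hQd
  have key2 : R * (Rᵀ * R)⁻¹ * Rᵀ = Wt * Wtᵀ := by
    conv_lhs => rw [← hPfac]
    exact s16_key1 Wt P hWo hPd
  have key3 : R * (Rᵀ * R)⁻¹ * (Lᵀ * L)⁻¹ * Lᵀ = Wt * St⁻¹ * Vtᵀ := by
    conv_lhs => rw [← hPfac, ← hQfac]
    rw [hSQP]
    exact s16_key3 Vt Wt Q P hVo hWo hQd hPd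
  refine ⟨key1, key2, key3, ?_⟩
  -- rewrite the measurement residual as M
  have hMeq : measAdj A (measOp A Xstar - measOp A (L * Rᵀ)) = M := by
    have harg : measOp A Xstar - measOp A (L * Rᵀ) = measOp A (Xstar - L * Rᵀ) := by
      funext i
      simp [measOp, frobInner, Matrix.mul_sub, Matrix.trace_sub, mul_sub]
    rw [hM]
    unfold opAA
    rw [harg]
  rw [hMeq] at hLn hRn
  rw [hLn, hRn]
  -- assoc-normalized versions of the key identities
  have K1 : L * ((Lᵀ * L)⁻¹ * (Lᵀ * M)) = Vt * (Vtᵀ * M) := by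
    have := congrArg (fun Z => Z * M) key1
    simpa only [Matrix.mul_assoc] using this
  have K2 : M * (R * ((Rᵀ * R)⁻¹ * Rᵀ)) = M * (Wt * Wtᵀ) := by
    have := congrArg (fun Z => M * Z) key2
    simpa only [Matrix.mul_assoc] using this
  have K3 : M * (R * ((Rᵀ * R)⁻¹ * ((Lᵀ * L)⁻¹ * (Lᵀ * M)))) =
      M * (Wt * (St⁻¹ * (Vtᵀ * M))) := by
    have := congrArg (fun Z => M * (Z * M)) key3
    simpa only [Matrix.mul_assoc] using this
  simp only [Matrix.transpose_add, Matrix.transpose_smul, Matrix.transpose_mul,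
    Matrix.transpose_transpose, Matrix.transpose_nonsing_inv, Matrix.add_mul,
    Matrix.mul_add, Matrix.smul_mul, Matrix.mul_smul, smul_add, smul_smul, ← pow_two,
    Matrix.mul_assoc]
  rw [K1, K2, K3]
  abel
end
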